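/- A Schröder tree is right-directed if the leftmost child subtree of each of its internal nodes is a leaf. For every n ≥ 0, the number of right-directed Schröder trees of weight n equals the Catalan number C_n. -/

import Mathlib

inductive PTree : Type where
  | node : List PTree → PTree

mutual
  def leavesT : PTree → ℕ
    | .node [] => 1
    | .node (t :: ts) => leavesT t + leavesL ts
  def leavesL : List PTree → ℕ
    | [] => 0
    | t :: ts => leavesT t + leavesL ts
end

inductive Reduced : PTree → Prop where
  | leaf : Reduced (.node [])
  | node : ∀ ts : List PTree, 2 ≤ ts.length → (∀ t ∈ ts, Reduced t) → Reduced (.node ts)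

/-- Right-directed plane trees: the leftmost child subtree of each internal node
is a leaf. -/
inductive RightDirected : PTree → Prop where
  | leaf : RightDirected (.node [])
  | node : ∀ ts : List PTree, ts.head? = some (.node []) →
      (∀ t ∈ ts, RightDirected t) → RightDirected (.node ts)

def PTree.children : PTree → List PTree
  | .node ts => ts

def f : Tree Unit → PTree
  | .nil => .node []
  | .node _ a b => .node (.node [] :: f a :: (f b).children.tail)

lemma leavesT_pos : ∀ t : PTree, 1 ≤ leavesT t
  | .node [] => le_refl 1
  | .node (t :: ts) => by
      have := leavesT_pos t
      simp only [leavesT]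
      omega

lemma f_inj : Function.Injective f := by
  intro T
  induction T with
  | nil =>
    intro T'
    cases T' with
    | nil => intro _; rfl
    | node u a b => intro h; simp [f] at h
  | node u a b iha ihb =>
    intro T'
    cases T' with
    | nil => intro h; simp [f] at h
    | node u' a' b' =>
      intro h
      simp only [f, PTree.node.injEq, List.cons.injEq] at h
      obtain ⟨_, ha, htail⟩ := h
      have haa : a = a' := iha ha
      have hbb : b = b' := by
        cases b with
        | nil =>
          cases b' with
          | nil => rfl
          | node u'' a'' b'' => simp [f, PTree.children] at htail
        | node u2 a2 b2 =>
          cases b' with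
          | nil => simp [f, PTree.children] at htail
          | node u3 a3 b3 =>
            apply ihb
            simp only [f, PTree.children, List.tail_cons, List.cons.injEq] at htail
            simp [f, PTree.children, htail.1, htail.2]
      cases u; cases u'
      rw [haa, hbb]

lemma f_props : ∀ T : Tree Unit,
    Reduced (f T) ∧ RightDirected (f T) ∧ leavesT (f T) = T.numNodes + 1 := by
  intro T
  induction T with
  | nil => exact ⟨Reduced.leaf, RightDirected.leaf, rfl⟩
  | node u a b iha ihb =>
    obtain ⟨hra, hda, hla⟩ := iha
    obtain ⟨hrb, hdb, hlb⟩ := ihb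
    -- analyze children of f b
    have key : ((f b).children.tail = [] ∧ leavesL (f b).children.tail = 0 ∧ b = .nil) ∨
        (∃ l, f b = .node (.node [] :: l) ∧ (f b).children.tail = l ∧
          leavesL l = b.numNodes) := by
      cases b with
      | nil => exact Or.inl ⟨rfl, rfl, rfl⟩
      | node u2 a2 b2 =>
        refine Or.inr ⟨f a2 :: (f b2).children.tail, rfl, by simp [f, PTree.children], ?_⟩
        have : leavesT (f (Tree.node u2 a2 b2)) = (Tree.node u2 a2 b2).numNodes + 1 := hlb
        simp only [f, leavesT, leavesL, BinaryTree.numNodes] at this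
        simp only [leavesL, BinaryTree.numNodes]
        omega
    have hmem : ∀ s ∈ (f b).children.tail, Reduced s ∧ RightDirected s := by
      rcases key with ⟨h1, _, _⟩ | ⟨l, hf, ht, _⟩
      · simp [h1]
      · intro s hs
        rw [ht] at hs
        rw [hf] at hrb hdb
        constructor
        · cases hrb with
          | node _ _ hall => exact hall s (List.mem_cons_of_mem _ hs)
        · cases hdb with
          | node _ _ hall => exact hall s (List.mem_cons_of_mem _ hs)
    refine ⟨?_, ?_, ?_⟩
    · apply Reduced.node
      · simp
      · intro t ht
        simp only [List.mem_cons] at ht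
        rcases ht with rfl | rfl | ht
        · exact Reduced.leaf
        · exact hra
        · exact (hmem t ht).1
    · apply RightDirected.node
      · rfl
      · intro t ht
        simp only [List.mem_cons] at ht
        rcases ht with rfl | rfl | ht
        · exact RightDirected.leaf
        · exact hda
        · exact (hmem t ht).2
    · simp only [f, leavesT, leavesL, Tree.numNodes, BinaryTree.numNodes] at hla hlb ⊢
      rcases key with ⟨h1, h2, rfl⟩ | ⟨l, hf, ht, hl⟩
      · rw [h1]; simp only [leavesL, BinaryTree.numNodes]; omega
      · rw [ht, hl]; omega

lemma f_surj : ∀ n t, leavesT t ≤ n → Reduced t → RightDirected t → ∃ T, f T = t := by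
  intro n
  induction n with
  | zero => intro t h; have := leavesT_pos t; omega
  | succ N ih =>
    intro t hle hr hd
    cases t with
    | node ts =>
      cases ts with
      | nil => exact ⟨.nil, rfl⟩
      | cons t0 ts' =>
        -- t0 is a leaf
        have ht0 : t0 = .node [] := by
          rcases hd with _ | ⟨_, hh, _⟩
          simpa using hh
        subst ht0
        rcases hr with _ | ⟨_, hlen, hallr⟩
        rcases hd with _ | ⟨_, _, halld⟩
        cases ts' with
        | nil => simp at hlen
        | cons t1 rest =>
          have ht1r : Reduced t1 := hallr t1 (by simp)
          have ht1d : RightDirected t1 := halld t1 (by simp)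
          have hl : leavesT (.node (.node [] :: t1 :: rest)) =
              1 + (leavesT t1 + leavesL rest) := by
            simp [leavesT, leavesL]
          have ht1pos := leavesT_pos t1
          obtain ⟨a, ha⟩ := ih t1 (by omega) ht1r ht1d
          cases rest with
          | nil =>
            refine ⟨.node () a .nil, ?_⟩
            simp [f, PTree.children, ha]
          | cons r rest' =>
            have hrpos := leavesT_pos r
            have hl2 : leavesT (.node (.node [] :: r :: rest')) =
                1 + (leavesT r + leavesL rest') := by
              simp [leavesT, leavesL]
            have hlrest : leavesL (r :: rest') = leavesT r + leavesL rest' := by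
              simp [leavesL]
            have hred' : Reduced (.node (.node [] :: r :: rest')) := by
              apply Reduced.node
              · simp
              · intro s hs
                simp only [List.mem_cons] at hs
                rcases hs with rfl | hs
                · exact Reduced.leaf
                · exact hallr s (by simp [hs])
            have hdir' : RightDirected (.node (.node [] :: r :: rest')) := by
              apply RightDirected.node
              · rfl
              · intro s hs
                simp only [List.mem_cons] at hs
                rcases hs with rfl | hs
                · exact RightDirected.leaf
                · exact halld s (by simp [hs])
            obtain ⟨b, hb⟩ := ih (.node (.node [] :: r :: rest')) (by omega) hred' hdir'
            refine ⟨.node () a b, ?_⟩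
            simp [f, ha, hb, PTree.children]

/-- the number of right-directed Schröder trees of weight `n`
equals the Catalan number `C_n`. -/
theorem stmt16 (n : ℕ) :
    {t : PTree | Reduced t ∧ RightDirected t ∧ leavesT t = n + 1}.ncard = catalan n := by
  have him : {t : PTree | Reduced t ∧ RightDirected t ∧ leavesT t = n + 1} =
      f '' {T : Tree Unit | T.numNodes = n} := by
    ext t
    constructor
    · rintro ⟨hr, hd, hl⟩
      obtain ⟨T, rfl⟩ := f_surj (leavesT t) t le_rfl hr hd
      have := (f_props T).2.2
      exact ⟨T, by simp only [Set.mem_setOf_eq]; omega, rfl⟩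
    · rintro ⟨T, hT, rfl⟩
      simp only [Set.mem_setOf_eq] at hT
      exact ⟨(f_props T).1, (f_props T).2.1, by rw [(f_props T).2.2, hT]⟩
  rw [him, Set.ncard_image_of_injective _ f_inj]
  have : {T : Tree Unit | T.numNodes = n} = ↑(Tree.treesOfNumNodesEq n) := by
    ext T; simp [BinaryTree.mem_treesOfNumNodesEq]
  rw [this, Set.ncard_coe_finset, BinaryTree.treesOfNumNodesEq_card_eq_catalan]
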